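/- Let J and A be categories, D : J ⥤ A a functor, ℓ an object of A, and λ : (Functor.const J).obj ℓ ⟶ D a natural transformation (a cone over D with apex ℓ). Then the cone with point ℓ and legs given by the components of λ is a limit cone for D if and only if the following absolute right lifting property holds: for every category X, every functor B : X ⥤ A, and every natural transformation χ : B ⋙ Functor.const J ⟶ (Functor.const X).obj D (between functors X ⥤ (J ⥤ A)), there exists a unique natural transformation ζ : B ⟶ (Functor.const X).obj ℓ such that χ is the composite of the whiskering of ζ with Functor.const J : A ⥤ (J ⥤ A) followed by the natural transformation (Functor.const X).obj ((Functor.const J).obj ℓ) ⟶ (Functor.const X).obj D whose component at every object of X is λ. -/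

import Mathlib

open CategoryTheory CategoryTheory.Limits

universe v₁ v₂ v₃ u₁ u₂ u₃

/-- A cone `λ : Δℓ ⟶ D` over a diagram `D : J ⥤ A` is a limit cone if and only if
`(ℓ, λ)` is an absolute right lifting of `D` through the constant-diagram functor
`Functor.const J : A ⥤ (J ⥤ A)`: every natural transformation
`χ : B ⋙ Functor.const J ⟶ Δ_X D` factors uniquely through `λ`. -/
theorem isLimit_iff_absoluteRightLifting {J : Type u₁} [Category.{v₁} J]
    {A : Type u₂} [Category.{v₂} A] (D : J ⥤ A) (ℓ : A)
    (lam : (Functor.const J).obj ℓ ⟶ D) :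
    Nonempty (IsLimit (⟨ℓ, lam⟩ : Cone D)) ↔
      ∀ (X : Type u₃) (_ : Category.{v₃} X) (B : X ⥤ A)
        (χ : B ⋙ Functor.const J ⟶ (Functor.const X).obj D),
        ∃! ζ : B ⟶ (Functor.const X).obj ℓ,
          χ = CategoryTheory.Functor.whiskerRight ζ (Functor.const J) ≫
            (Functor.const X).map lam := by
  constructor
  · rintro ⟨h⟩ X instX B χ
    -- each component of χ is a cone over D
    have hnat : ∀ {x y : X} (f : x ⟶ y) (j : J),
        B.map f ≫ (χ.app y).app j = (χ.app x).app j := by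
      intro x y f j
      have := congrArg (fun t => NatTrans.app t j) (χ.naturality f)
      simpa using this
    refine ⟨{ app := fun x => h.lift ⟨B.obj x, χ.app x⟩
              naturality := ?_ }, ?_, ?_⟩
    · intro x y f
      have h1 : ∀ j, (B.map f ≫ h.lift ⟨B.obj y, χ.app y⟩) ≫ lam.app j
          = (χ.app x).app j := by
        intro j
        rw [Category.assoc, h.fac ⟨B.obj y, χ.app y⟩ j]
        exact hnat f j
      have := h.uniq ⟨B.obj x, χ.app x⟩ (B.map f ≫ h.lift ⟨B.obj y, χ.app y⟩) h1
      simpa using this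
    · ext x j
      simpa using (h.fac ⟨B.obj x, χ.app x⟩ j).symm
    · intro ζ' hζ'
      ext x
      refine (h.uniq ⟨B.obj x, χ.app x⟩ (ζ'.app x) ?_).symm ▸ rfl
      intro j
      have := congrArg (fun t => ((t.app x).app j : B.obj x ⟶ D.obj j)) hζ'
      simpa using this.symm
  · intro H
    -- instantiate with a one-object category at the right universes
    letI instX : Category.{v₃} (ULift.{u₃} PUnit) :=
      { Hom := fun _ _ => PUnit.{v₃ + 1}
        id := fun _ => ⟨⟩
        comp := fun _ _ => ⟨⟩ }
    constructor
    refine IsLimit.mk (fun s => ?_) ?_ ?_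
    case refine_1 =>
      exact (H (ULift.{u₃} PUnit) instX ((Functor.const _).obj s.pt)
        { app := fun _ => s.π
          naturality := by intros; ext j; simp }).exists.choose.app ⟨⟨⟩⟩
    case refine_2 =>
      intro s j
      have hspec := (H (ULift.{u₃} PUnit) instX ((Functor.const _).obj s.pt)
        { app := fun _ => s.π
          naturality := by intros; ext j; simp }).exists.choose_spec
      have := congrArg (fun t => ((t.app ⟨⟨⟩⟩).app j : s.pt ⟶ D.obj j)) hspec
      simpa using this.symm
    case refine_3 =>
      intro s m hm
      have H' := H (ULift.{u₃} PUnit) instX ((Functor.const _).obj s.pt)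
        { app := fun _ => s.π
          naturality := by intros; ext j; simp }
      have h1 := H'.unique (y₁ := { app := fun _ => m, naturality := by intros; simp })
        (y₂ := H'.exists.choose) ?_ H'.exists.choose_spec
      · exact congrArg (fun t => (t.app ⟨⟨⟩⟩ : s.pt ⟶ ℓ)) h1
      · ext x j
        simpa using (hm j).symm
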